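/- If the trivial extension R ⋉ M is left morphic, then M is a Bézout left R-module: every finitely generated left submodule of M is cyclic. -/

import Mathlib

open TrivSqZeroExt

/-- A ring `S` is left morphic if every element `a` admits `b` with
`ann_l(a) = Sb` and `ann_l(b) = Sa`. -/
def IsLeftMorphicRing (S : Type*) [Ring S] : Prop :=
  ∀ a : S, ∃ b : S, ({x : S | x * a = 0} = {x : S | ∃ r, x = r * b}) ∧
    ({x : S | x * b = 0} = {x : S | ∃ r, x = r * a})

/-- Left morphic rings are left Bézout: `Sa + Sb` is principal. -/
lemma leftMorphic_bezout {S : Type*} [Ring S] (h : IsLeftMorphicRing S) (a b : S) :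
    ∃ e : S, ∀ x : S, (∃ s t : S, x = s * a + t * b) ↔ (∃ s : S, x = s * e) := by
  obtain ⟨a₁, _, h2⟩ := h a
  obtain ⟨d, _, h4⟩ := h (b * a₁)
  obtain ⟨e, h5, _⟩ := h (a₁ * d)
  refine ⟨e, fun x => ?_⟩
  have key : (∃ s : S, x = s * e) ↔ x * (a₁ * d) = 0 :=
    (Set.ext_iff.mp h5 x).symm
  rw [key]
  constructor
  · rintro ⟨s, t, rfl⟩
    have hsa : s * a * a₁ = 0 := by
      have : s * a ∈ {x : S | x * a₁ = 0} := by
        rw [h2]; exact ⟨s, rfl⟩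
      exact this
    have htb : t * b * (a₁ * d) = 0 := by
      have : t * (b * a₁) ∈ {x : S | x * d = 0} := by
        rw [h4]; exact ⟨t, rfl⟩
      have h' : t * (b * a₁) * d = 0 := this
      calc t * b * (a₁ * d) = t * (b * a₁) * d := by noncomm_ring
        _ = 0 := h'
    calc (s * a + t * b) * (a₁ * d) = (s * a * a₁) * d + t * b * (a₁ * d) := by noncomm_ring
      _ = 0 * d + 0 := by rw [hsa, htb]
      _ = 0 := by simp
  · intro hx
    have hxa : x * a₁ ∈ {y : S | y * d = 0} := by
      show x * a₁ * d = 0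
      rw [mul_assoc]; exact hx
    rw [h4] at hxa
    obtain ⟨r, hr⟩ := hxa
    have hsub : (x - r * b) * a₁ = 0 := by
      calc (x - r * b) * a₁ = x * a₁ - r * (b * a₁) := by noncomm_ring
        _ = 0 := by rw [hr]; exact sub_self _
    have : (x - r * b) ∈ {y : S | y * a₁ = 0} := hsub
    rw [h2] at this
    obtain ⟨s, hs⟩ := this
    refine ⟨s, r, ?_⟩
    have := sub_eq_iff_eq_add.mp hs
    rw [this]

lemma mul_inr' {R M : Type*} [Ring R] [AddCommGroup M] [Module R M] [Module Rᵐᵒᵖ M]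
    [SMulCommClass R Rᵐᵒᵖ M] (s : TrivSqZeroExt R M) (x : M) :
    s * (inr x : TrivSqZeroExt R M) = inr (s.fst • x) := by
  ext
  · simp
  · simp

/-- The span of a pair is cyclic. -/
lemma pair_cyclic {R M : Type*} [Ring R] [AddCommGroup M] [Module R M] [Module Rᵐᵒᵖ M]
    [SMulCommClass R Rᵐᵒᵖ M] (h : IsLeftMorphicRing (TrivSqZeroExt R M)) (x y : M) :
    ∃ z : M, Submodule.span R ({x, y} : Set M) = Submodule.span R ({z} : Set M) := by
  obtain ⟨e, he⟩ := leftMorphic_bezout h (inr x : TrivSqZeroExt R M) (inr y)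
  obtain ⟨s, t, hst⟩ := (he e).mpr ⟨1, (one_mul e).symm⟩
  rw [mul_inr', mul_inr', ← inr_add] at hst
  set z : M := s.fst • x + t.fst • y with hz
  refine ⟨z, le_antisymm ?_ ?_⟩
  · rw [Submodule.span_le]
    rintro w (rfl | rfl)
    · obtain ⟨u, hu⟩ := (he (inr w)).mp ⟨1, 0, by rw [one_mul, zero_mul, add_zero]⟩
      rw [hst, mul_inr'] at hu
      have : w = u.fst • z := by
        have := congrArg TrivSqZeroExt.snd hu
        simpa using this
      rw [SetLike.mem_coe, Submodule.mem_span_singleton]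
      exact ⟨u.fst, this.symm⟩
    · obtain ⟨u, hu⟩ := (he (inr w)).mp ⟨0, 1, by rw [one_mul, zero_mul, zero_add]⟩
      rw [hst, mul_inr'] at hu
      have : w = u.fst • z := by
        have := congrArg TrivSqZeroExt.snd hu
        simpa using this
      rw [SetLike.mem_coe, Submodule.mem_span_singleton]
      exact ⟨u.fst, this.symm⟩
  · rw [Submodule.span_le]
    rintro w rfl
    rw [SetLike.mem_coe, Submodule.mem_span_pair]
    exact ⟨s.fst, t.fst, rfl⟩

/-- If the trivial extension `R ⋉ M` is left morphic, then `M` is a Bézout left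
`R`-module: every finitely generated left submodule of `M` is cyclic. -/
theorem stmt5 {R M : Type*} [Ring R] [AddCommGroup M] [Module R M] [Module Rᵐᵒᵖ M]
    [SMulCommClass R Rᵐᵒᵖ M] (h : IsLeftMorphicRing (TrivSqZeroExt R M)) :
    ∀ N : Submodule R M, N.FG → ∃ x : M, N = Submodule.span R ({x} : Set M) := by
  intro N hN
  refine Submodule.fg_induction
    (motive := fun N _ => ∃ x : M, N = Submodule.span R ({x} : Set M)) ?_ ?_ N hN
  · exact fun x => ⟨x, rfl⟩
  · rintro N₁ N₂ _ _ ⟨x, rfl⟩ ⟨y, rfl⟩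
    obtain ⟨z, hzz⟩ := pair_cyclic h x y
    refine ⟨z, ?_⟩
    rw [← hzz, ← Submodule.span_union]
    congr 1
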